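/- Let ι₁ : □^{p,Q₁} ↪ □^{p,q} and ι₂ : □^{p,Q₂} ↪ □^{p,q} be open rectilinear embeddings. If the images of the deepest strata intersect, i.e. ι₁(□^{p,Q₁}_{[Q₁]}) ∩ ι₂(□^{p,Q₂}_{[Q₂]}) ≠ ∅, then Q₁ = Q₂. -/

import Mathlib

open Set

/-- Points of `ℝ^{p+q} = ℝ^p × ℝ^q`. -/
abbrev Pt (p q : ℕ) := (Fin p → ℝ) × (Fin q → ℝ)

/-- The cube `□^{p,Q} = (-1,1)^p × ∏ δ_i` where `δ_i = [0,1)` for `i ∈ Q`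
and `δ_i = (-1,1)` otherwise. -/
def cube (p q : ℕ) (Q : Set (Fin q)) : Set (Pt p q) :=
  {x | (∀ i, x.1 i ∈ Ioo (-1 : ℝ) 1) ∧
    ∀ j, (j ∈ Q → x.2 j ∈ Ico (0 : ℝ) 1) ∧ (j ∉ Q → x.2 j ∈ Ioo (-1 : ℝ) 1)}

/-- A rectilinear map of `ℝ^{p+q}`: composition of a coordinatewise dilation with
positive factors and a translation. -/
def IsRectilinear (p q : ℕ) (f : Pt p q → Pt p q) : Prop :=
  ∃ (a b : Fin p → ℝ) (c e : Fin q → ℝ),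
    (∀ i, 0 < a i) ∧ (∀ j, 0 < c j) ∧
      ∀ x : Pt p q, f x = (fun i => a i * x.1 i + b i, fun j => c j * x.2 j + e j)

/-- An open rectilinear embedding `□^{p,Q'} ↪ □^{p,Q}`: the restriction of a rectilinear
map sending `□^{p,Q'}` into `□^{p,Q}`, whose image is open in `□^{p,Q}`
(rectilinear maps are automatically injective). -/
def OpenRectEmb (p q : ℕ) (f : Pt p q → Pt p q) (Q' Q : Set (Fin q)) : Prop :=
  IsRectilinear p q f ∧ f '' cube p q Q' ⊆ cube p q Q ∧
    ∃ O : Set (Pt p q), IsOpen O ∧ f '' cube p q Q' = O ∩ cube p q Q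

/-- The deepest stratum `□^{p,Q}_{[Q]}` of `□^{p,Q}`: the points whose coordinates
indexed by `Q` all vanish. -/
def deepStratum (p q : ℕ) (Q : Set (Fin q)) : Set (Pt p q) :=
  {x ∈ cube p q Q | ∀ j ∈ Q, x.2 j = 0}

/-- Key lemma: a point in the image of the deepest stratum has its `j`-th second
coordinate zero exactly when `j ∈ Q`. -/
lemma key_lemma (p q : ℕ) (Q : Set (Fin q)) (f : Pt p q → Pt p q)
    (h : OpenRectEmb p q f Q Set.univ) {y : Pt p q}
    (hy : y ∈ f '' deepStratum p q Q) : ∀ j, j ∈ Q ↔ y.2 j = 0 := by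
  obtain ⟨⟨a, b, c, e, ha, hc, hf⟩, hsub, O, hO, himg⟩ := h
  obtain ⟨x, hx, hfx⟩ := hy
  obtain ⟨hxcube, hx0⟩ := hx
  have hyim : y ∈ f '' cube p q Q := ⟨x, hxcube, hfx⟩
  have hycube : y ∈ cube p q Set.univ := hsub hyim
  have hyO : y ∈ O := (himg ▸ hyim).1
  have hy2 : ∀ j, y.2 j = c j * x.2 j + e j := by
    intro j; rw [← hfx, hf]
  intro j
  constructor
  · intro hjQ
    have hxj : x.2 j = 0 := hx0 j hjQ
    have hyj : y.2 j = e j := by rw [hy2, hxj]; ring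
    have hyIco : y.2 j ∈ Ico (0 : ℝ) 1 := (hycube.2 j).1 (mem_univ j)
    by_contra hne
    have hypos : 0 < y.2 j := lt_of_le_of_ne hyIco.1 (Ne.symm hne)
    -- use openness to find a point of the image with smaller j-th coordinate
    set g : ℝ → Pt p q := fun t => (y.1, Function.update y.2 j t) with hg
    have hgc : Continuous g := by
      apply continuous_const.prodMk
      apply continuous_pi
      intro j'
      by_cases hj' : j' = j
      · subst hj'; simpa using continuous_id'
      · simp only [Function.update_of_ne hj']; exact continuous_const
    have hgy : g (y.2 j) = y := by
      simp [hg, Function.update_eq_self]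
    have hmem : g ⁻¹' O ∈ nhds (y.2 j) := by
      apply hgc.continuousAt.preimage_mem_nhds
      rw [hgy]; exact hO.mem_nhds hyO
    obtain ⟨ε, hε, hball⟩ := Metric.mem_nhds_iff.mp hmem
    set t : ℝ := y.2 j - min ε (y.2 j) / 2 with ht
    have hmin : 0 < min ε (y.2 j) := lt_min hε hypos
    have htlt : t < y.2 j := by simp only [ht]; linarith
    have ht0 : 0 ≤ t := by
      have := min_le_right ε (y.2 j); simp only [ht]; linarith
    have ht1 : t < 1 := lt_trans htlt hyIco.2
    have htO : g t ∈ O := by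
      apply hball
      rw [Metric.mem_ball, Real.dist_eq]
      have := min_le_left ε (y.2 j)
      rw [abs_of_nonpos (by simp only [ht]; linarith)]
      simp only [ht]; linarith
    have htcube : g t ∈ cube p q Set.univ := by
      refine ⟨hycube.1, fun j' => ⟨fun _ => ?_, fun hj' => absurd (mem_univ j') hj'⟩⟩
      by_cases hj' : j' = j
      · subst hj'; simp only [hg, Function.update_self]; exact ⟨ht0, ht1⟩
      · simp only [hg, Function.update_of_ne hj']
        exact (hycube.2 j').1 (mem_univ j')
    have : g t ∈ f '' cube p q Q := by rw [himg]; exact ⟨htO, htcube⟩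
    obtain ⟨z, hz, hfz⟩ := this
    have hzj : c j * z.2 j + e j = t := by
      have : (f z).2 j = t := by rw [hfz]; simp [hg, Function.update_self]
      rw [hf] at this; exact this
    have hzj0 : 0 ≤ z.2 j := ((hz.2 j).1 hjQ).1
    nlinarith [hc j, mul_nonneg (le_of_lt (hc j)) hzj0]
  · intro hyj0
    by_contra hjQ
    have hxj : x.2 j ∈ Ioo (-1 : ℝ) 1 := (hxcube.2 j).2 hjQ
    -- first show c j ≤ e j
    have hce : c j ≤ e j := by
      by_contra hlt
      push_neg at hlt
      set s : ℝ := min 1 (-(e j) / c j) with hs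
      have hs1 : s ≤ 1 := min_le_left _ _
      have hs2 : s ≤ -(e j) / c j := min_le_right _ _
      have hs3 : (-1 : ℝ) < -(e j) / c j := by
        rw [lt_div_iff₀ (hc j)]; linarith
      have hs4 : (-1 : ℝ) < s := lt_min (by norm_num) hs3
      set t : ℝ := (-1 + s) / 2 with htdef
      have ht1 : (-1 : ℝ) < t := by simp only [htdef]; linarith
      have hts : t < s := by simp only [htdef]; linarith
      have ht2 : t < 1 := lt_of_lt_of_le hts hs1
      have hneg : c j * t + e j < 0 := by
        have h1 : s * c j ≤ -(e j) := (le_div_iff₀ (hc j)).mp hs2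
        nlinarith [hc j]
      -- the modified point is in the cube, so its image is in cube univ
      set z : Pt p q := (x.1, Function.update x.2 j t) with hzdef
      have hzcube : z ∈ cube p q Q := by
        refine ⟨hxcube.1, fun j' => ⟨fun hj' => ?_, fun hj' => ?_⟩⟩
        · have hj'ne : j' ≠ j := by rintro rfl; exact hjQ hj'
          simp only [hzdef, Function.update_of_ne hj'ne]
          exact (hxcube.2 j').1 hj'
        · by_cases hje : j' = j
          · subst hje; simp only [hzdef, Function.update_self]; exact ⟨ht1, ht2⟩
          · simp only [hzdef, Function.update_of_ne hje]
            exact (hxcube.2 j').2 hj'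
      have hfz : f z ∈ cube p q Set.univ := hsub ⟨z, hzcube, rfl⟩
      have : (f z).2 j ∈ Ico (0 : ℝ) 1 := (hfz.2 j).1 (mem_univ j)
      rw [hf] at this
      simp only [hzdef, Function.update_self] at this
      linarith [this.1]
    have : 0 < y.2 j := by
      rw [hy2]
      nlinarith [hc j, hxj.1]
    linarith
/-- If the images of the deepest strata of two open rectilinear embeddings
`ι₁ : □^{p,Q₁} ↪ □^{p,q}` and `ι₂ : □^{p,Q₂} ↪ □^{p,q}` intersect, then `Q₁ = Q₂`. -/
theorem openRectEmb_deepStratum_inter_types_eq (p q : ℕ) (Q₁ Q₂ : Set (Fin q))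
    (f₁ f₂ : Pt p q → Pt p q)
    (h₁ : OpenRectEmb p q f₁ Q₁ Set.univ) (h₂ : OpenRectEmb p q f₂ Q₂ Set.univ)
    (hne : (f₁ '' deepStratum p q Q₁ ∩ f₂ '' deepStratum p q Q₂).Nonempty) :
    Q₁ = Q₂ := by
  obtain ⟨y, hy₁, hy₂⟩ := hne
  ext j
  rw [key_lemma p q Q₁ f₁ h₁ hy₁ j, key_lemma p q Q₂ f₂ h₂ hy₂ j]
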